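/- arXiv:1104.2355 — 4 statements merged into one kernel-verified Lean document; each statement's English description precedes it below -/
import Mathlib

section
/- Let c ≥ 0 be a real number and define Q(x) = (gaussianReal 0 1) (Set.Ici x), the standard normal tail probability. Then the function s ↦ Q( √2 · (c − s/2) / √s ) is strictly monotone increasing on (0, ∞): for all reals 0 < s₁ < s₂, Q( √2 · (c − s₁/2) / √s₁ ) < Q( √2 · (c − s₂/2) / √s₂ ). -/
open ProbabilityTheory Real

lemma gaussian_Ici_strict_anti {a b : ℝ} (hab : a < b) :
    (gaussianReal 0 1) (Set.Ici b) < (gaussianReal 0 1) (Set.Ici a) := by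
  have hunion : Set.Ici a = Set.Ico a b ∪ Set.Ici b := by
    rw [Set.Ico_union_Ici_eq_Ici hab.le]
  have hdisj : Disjoint (Set.Ico a b) (Set.Ici b) := by
    apply Set.disjoint_left.2
    rintro x ⟨_, hx2⟩ hx3
    exact absurd hx3 (not_le.2 hx2)
  rw [hunion, MeasureTheory.measure_union hdisj measurableSet_Ici]
  have hfin : (gaussianReal 0 1) (Set.Ici b) ≠ ⊤ := MeasureTheory.measure_ne_top _ _
  have hpos : (gaussianReal 0 1) (Set.Ico a b) ≠ 0 := by
    intro h0
    have := (gaussianReal_absolutelyContinuous' 0 (by norm_num)) h0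
    rw [Real.volume_Ico] at this
    simp only [ENNReal.ofReal_eq_zero] at this
    linarith
  calc (gaussianReal 0 1) (Set.Ici b)
      < (gaussianReal 0 1) (Set.Ici b) + (gaussianReal 0 1) (Set.Ico a b) :=
        ENNReal.lt_add_right hfin hpos
    _ = (gaussianReal 0 1) (Set.Ico a b) + (gaussianReal 0 1) (Set.Ici b) := add_comm _ _

/-- The detection probability `Q(√2 (c − s/2) / √s)` under perfect CSI, where
`Q` is the standard normal tail probability, is strictly increasing in the SNR term `s`. -/
theorem detection_prob_strict_mono (c : ℝ) (hc : 0 ≤ c) (s₁ s₂ : ℝ)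
    (h₁ : 0 < s₁) (h₁₂ : s₁ < s₂) :
    (gaussianReal 0 1) (Set.Ici (Real.sqrt 2 * (c - s₁ / 2) / Real.sqrt s₁))
      < (gaussianReal 0 1) (Set.Ici (Real.sqrt 2 * (c - s₂ / 2) / Real.sqrt s₂)) := by
  apply gaussian_Ici_strict_anti
  have h₂ : 0 < s₂ := h₁.trans h₁₂
  have key : ∀ s : ℝ, 0 < s →
      Real.sqrt 2 * (c - s / 2) / Real.sqrt s
        = Real.sqrt 2 * c / Real.sqrt s - Real.sqrt 2 / 2 * Real.sqrt s := by
    intro s hs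
    have hss : Real.sqrt s * Real.sqrt s = s := Real.mul_self_sqrt hs.le
    have hsne : Real.sqrt s ≠ 0 := (Real.sqrt_pos.2 hs).ne'
    field_simp
    linear_combination hss
  rw [key s₁ h₁, key s₂ h₂]
  have hsqrt : Real.sqrt s₁ < Real.sqrt s₂ := Real.sqrt_lt_sqrt h₁.le h₁₂
  have h2pos : (0:ℝ) < Real.sqrt 2 := Real.sqrt_pos.2 (by norm_num)
  have t1 : Real.sqrt 2 * c / Real.sqrt s₂ ≤ Real.sqrt 2 * c / Real.sqrt s₁ := by
    apply div_le_div_of_nonneg_left (by positivity) (Real.sqrt_pos.2 h₁) hsqrt.le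
  have t2 : Real.sqrt 2 / 2 * Real.sqrt s₁ < Real.sqrt 2 / 2 * Real.sqrt s₂ := by
    apply mul_lt_mul_of_pos_left hsqrt (by positivity)
  linarith
end

section
/- Let (Ω, P) be a probability space and X, Y : Ω → ℝ be independent random variables with Measure.map X P = gaussianReal m_X (σ_X²) and Measure.map Y P = gaussianReal m_Y (σ_Y²), where σ_X > 0 and σ_Y > 0. Set ρ_X = m_X/σ_X and ρ_Y = m_Y/σ_Y. Then for every real t with |t| < 1, mgf (fun ω => X ω * Y ω / (σ_X * σ_Y)) P t = exp( ((ρ_X² + ρ_Y²)·t² + 2·ρ_X·ρ_Y·t) / (2·(1 − t²)) ) / √(1 − t²). -/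
open MeasureTheory ProbabilityTheory Real

lemma integrable_exp_quad_vol (p q : ℝ) (hp : 0 < p) :
    Integrable (fun x : ℝ => rexp (-p * x ^ 2 + q * x)) := by
  have h : ∀ x : ℝ, -p * x ^ 2 + q * x
      = q ^ 2 / (4 * p) + (-p * (x - q / (2 * p)) ^ 2) := by
    intro x; field_simp; ring
  simp only [h, Real.exp_add]
  exact ((integrable_exp_neg_mul_sq hp).comp_sub_right (q / (2 * p))).const_mul _

lemma integral_exp_quad_vol (p q : ℝ) (hp : 0 < p) :
    (∫ x : ℝ, rexp (-p * x ^ 2 + q * x))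
      = rexp (q ^ 2 / (4 * p)) * Real.sqrt (π / p) := by
  have h : ∀ x : ℝ, -p * x ^ 2 + q * x
      = q ^ 2 / (4 * p) + (-p * (x - q / (2 * p)) ^ 2) := by
    intro x; field_simp; ring
  simp only [h, Real.exp_add]
  rw [MeasureTheory.integral_const_mul,
    integral_sub_right_eq_self (μ := volume) (fun a => rexp (-p * a ^ 2)) (q / (2 * p)),
    integral_gaussian]

lemma gauss_quad (m σ a b : ℝ) (hσ : 0 < σ) (ha : 2 * σ ^ 2 * a < 1) :
    Integrable (fun x => rexp (a * x ^ 2 + b * x)) (gaussianReal m ⟨σ ^ 2, sq_nonneg σ⟩) ∧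
    (∫ x, rexp (a * x ^ 2 + b * x) ∂(gaussianReal m ⟨σ ^ 2, sq_nonneg σ⟩))
      = rexp ((b * σ + m / σ) ^ 2 / (2 * (1 - 2 * σ ^ 2 * a)) - m ^ 2 / (2 * σ ^ 2))
        / Real.sqrt (1 - 2 * σ ^ 2 * a) := by
  set v : NNReal := ⟨σ ^ 2, sq_nonneg σ⟩ with hvdef
  have hσ2 : (0:ℝ) < σ ^ 2 := by positivity
  have hv : v ≠ 0 := by
    intro h
    have : (v : ℝ) = 0 := by rw [h]; rfl
    simp only [hvdef, NNReal.coe_mk] at this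
    change σ ^ 2 = 0 at this
    linarith
  have hvr : (v : ℝ) = σ ^ 2 := rfl
  have hD : (0:ℝ) < 1 - 2 * σ ^ 2 * a := by linarith
  set p : ℝ := (1 - 2 * σ ^ 2 * a) / (2 * σ ^ 2) with hpdef
  have hp : 0 < p := by positivity
  set q : ℝ := b + m / σ ^ 2 with hqdef
  have hpdf : ∀ x : ℝ, gaussianPDFReal m v x * rexp (a * x ^ 2 + b * x)
      = ((Real.sqrt (2 * π * σ ^ 2))⁻¹ * rexp (- m ^ 2 / (2 * σ ^ 2)))
        * rexp (-p * x ^ 2 + q * x) := by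
    intro x
    have key : rexp (-(x - m) ^ 2 / (2 * σ ^ 2)) * rexp (a * x ^ 2 + b * x)
        = rexp (- m ^ 2 / (2 * σ ^ 2)) * rexp (-p * x ^ 2 + q * x) := by
      rw [← Real.exp_add, ← Real.exp_add]
      congr 1
      rw [hpdef, hqdef]
      field_simp
      ring
    rw [gaussianPDFReal, hvr, mul_assoc ((Real.sqrt (2 * π * σ ^ 2))⁻¹), key]
    ring
  rw [gaussianReal_of_var_ne_zero m hv]
  have hgpdf : gaussianPDF m v = fun x => ((gaussianPDFReal m v x).toNNReal : ENNReal) := rfl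
  rw [hgpdf]
  have hmeas : Measurable fun x => (gaussianPDFReal m v x).toNNReal :=
    (measurable_gaussianPDFReal m v).real_toNNReal
  have hsm : ∀ x : ℝ, (gaussianPDFReal m v x).toNNReal • rexp (a * x ^ 2 + b * x)
      = ((Real.sqrt (2 * π * σ ^ 2))⁻¹ * rexp (- m ^ 2 / (2 * σ ^ 2)))
        * rexp (-p * x ^ 2 + q * x) := by
    intro x
    rw [NNReal.smul_def, Real.coe_toNNReal _ (gaussianPDFReal_nonneg m v x), smul_eq_mul, hpdf x]
  constructor
  · rw [integrable_withDensity_iff_integrable_smul hmeas]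
    simp only [hsm]
    exact (integrable_exp_quad_vol p q hp).const_mul _
  · rw [integral_withDensity_eq_integral_smul hmeas]
    simp only [hsm]
    rw [MeasureTheory.integral_const_mul, integral_exp_quad_vol p q hp]
    have hq : q ^ 2 / (4 * p)
        = (b * σ + m / σ) ^ 2 / (2 * (1 - 2 * σ ^ 2 * a)) := by
      rw [hqdef, hpdef]; field_simp; ring
    have hsq : Real.sqrt (π / p) = Real.sqrt (2 * π * σ ^ 2) / Real.sqrt (1 - 2 * σ ^ 2 * a) := by
      rw [← Real.sqrt_div (by positivity)]
      congr 1
      rw [hpdef]; field_simp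
    rw [hq, hsq]
    have h2 : Real.sqrt (2 * π * σ ^ 2) ≠ 0 := by
      positivity
    have hDne : Real.sqrt (1 - 2 * σ ^ 2 * a) ≠ 0 := by positivity
    have he : rexp (- m ^ 2 / (2 * σ ^ 2)) = (rexp (m ^ 2 / (2 * σ ^ 2)))⁻¹ := by
      rw [← Real.exp_neg]; congr 1; ring
    rw [Real.exp_sub, he]
    field_simp

/-- Craig's formula: the moment generating function of the normalized product of two
independent normal random variables. -/
theorem mgf_product_of_normals
    {Ω : Type*} [MeasurableSpace Ω] (P : Measure Ω) [IsProbabilityMeasure P]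
    (X Y : Ω → ℝ) (hXY : IndepFun X Y P)
    (mX mY σX σY : ℝ) (hσX : 0 < σX) (hσY : 0 < σY)
    (hX : Measure.map X P = gaussianReal mX ⟨σX ^ 2, sq_nonneg σX⟩)
    (hY : Measure.map Y P = gaussianReal mY ⟨σY ^ 2, sq_nonneg σY⟩)
    (t : ℝ) (ht : |t| < 1) :
    mgf (fun ω => X ω * Y ω / (σX * σY)) P t
      = Real.exp ((((mX / σX) ^ 2 + (mY / σY) ^ 2) * t ^ 2
            + 2 * (mX / σX) * (mY / σY) * t) / (2 * (1 - t ^ 2)))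
        / Real.sqrt (1 - t ^ 2) := by
  have ht2 : t ^ 2 < 1 := by
    have := abs_nonneg t
    nlinarith [sq_abs t]
  have hσX2 : (0:ℝ) < σX ^ 2 := by positivity
  have hσY2 : (0:ℝ) < σY ^ 2 := by positivity
  -- a.e. measurability of X and Y
  have hXa : AEMeasurable X P := by
    by_contra h
    have h0 := hX
    rw [Measure.map_of_not_aemeasurable h] at h0
    have := congrArg (fun μ : Measure ℝ => μ Set.univ) h0
    simp at this
    exact zero_ne_one (this.trans (instIsProbabilityMeasureGaussianReal _ _).measure_univ)
  have hYa : AEMeasurable Y P := by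
    by_contra h
    have h0 := hY
    rw [Measure.map_of_not_aemeasurable h] at h0
    have := congrArg (fun μ : Measure ℝ => μ Set.univ) h0
    simp at this
    exact zero_ne_one (this.trans (instIsProbabilityMeasureGaussianReal _ _).measure_univ)
  have hprod : Measure.map (fun ω => (X ω, Y ω)) P
      = (gaussianReal mX ⟨σX ^ 2, sq_nonneg σX⟩).prod (gaussianReal mY ⟨σY ^ 2, sq_nonneg σY⟩) := by
    rw [(indepFun_iff_map_prod_eq_prod_map_map hXa hYa).mp hXY, hX, hY]
  set μX := gaussianReal mX ⟨σX ^ 2, sq_nonneg σX⟩ with hμX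
  set μY := gaussianReal mY ⟨σY ^ 2, sq_nonneg σY⟩ with hμY
  haveI : IsProbabilityMeasure μX := instIsProbabilityMeasureGaussianReal _ _
  haveI : IsProbabilityMeasure μY := instIsProbabilityMeasureGaussianReal _ _
  have hgc : Continuous fun p : ℝ × ℝ => rexp (t * (p.1 * p.2 / (σX * σY))) := by
    fun_prop
  -- inner integral
  have hinner_eq : ∀ x : ℝ, ∀ y : ℝ, t * (x * y / (σX * σY))
      = 0 * y ^ 2 + (t * x / (σX * σY)) * y := by
    intro x y; ring
  have hinner : ∀ x : ℝ, (∫ y, rexp (t * (x * y / (σX * σY))) ∂μY)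
      = rexp ((t ^ 2 / (2 * σX ^ 2)) * x ^ 2 + (t * (mY / σY) / σX) * x) := by
    intro x
    have h0 : 2 * σY ^ 2 * 0 < 1 := by norm_num
    have := (gauss_quad mY σY 0 (t * x / (σX * σY)) hσY h0).2
    simp only [mul_zero, sub_zero, Real.sqrt_one, div_one] at this
    calc (∫ y, rexp (t * (x * y / (σX * σY))) ∂μY)
        = ∫ y, rexp (0 * y ^ 2 + (t * x / (σX * σY)) * y) ∂μY := by
          simp only [hinner_eq x]
      _ = rexp ((t * x / (σX * σY) * σY + mY / σY) ^ 2 / 2 - mY ^ 2 / (2 * σY ^ 2)) := by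
          rw [this]; norm_num
      _ = rexp ((t ^ 2 / (2 * σX ^ 2)) * x ^ 2 + (t * (mY / σY) / σX) * x) := by
          congr 1
          field_simp
          ring
  have hinner_int : ∀ x : ℝ, Integrable (fun y => rexp (t * (x * y / (σX * σY)))) μY := by
    intro x
    have h0 : 2 * σY ^ 2 * 0 < 1 := by norm_num
    have := (gauss_quad mY σY 0 (t * x / (σX * σY)) hσY h0).1
    exact this.congr (Filter.Eventually.of_forall fun y => (congrArg rexp (hinner_eq x y)).symm)
  -- outer integrability data
  have hout2 : 2 * σX ^ 2 * (t ^ 2 / (2 * σX ^ 2)) < 1 := by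
    rw [mul_div_cancel₀ _ (by positivity : (2:ℝ) * σX ^ 2 ≠ 0)]
    exact ht2
  have houter := gauss_quad mX σX (t ^ 2 / (2 * σX ^ 2)) (t * (mY / σY) / σX) hσX hout2
  -- integrability over the product
  have hInt : Integrable (fun p : ℝ × ℝ => rexp (t * (p.1 * p.2 / (σX * σY)))) (μX.prod μY) := by
    rw [MeasureTheory.integrable_prod_iff hgc.aestronglyMeasurable]
    constructor
    · filter_upwards with x
      exact hinner_int x
    · have : ∀ x : ℝ, (∫ y, ‖rexp (t * (x * y / (σX * σY)))‖ ∂μY)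
          = rexp ((t ^ 2 / (2 * σX ^ 2)) * x ^ 2 + (t * (mY / σY) / σX) * x) := by
        intro x
        simp only [Real.norm_eq_abs, Real.abs_exp]
        exact hinner x
      simp only [this]
      exact houter.1
  -- compute
  calc mgf (fun ω => X ω * Y ω / (σX * σY)) P t
      = ∫ ω, rexp (t * (X ω * Y ω / (σX * σY))) ∂P := rfl
    _ = ∫ p : ℝ × ℝ, rexp (t * (p.1 * p.2 / (σX * σY))) ∂(Measure.map (fun ω => (X ω, Y ω)) P) :=
        (integral_map (hXa.prodMk hYa) hgc.aestronglyMeasurable).symm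
    _ = ∫ p : ℝ × ℝ, rexp (t * (p.1 * p.2 / (σX * σY))) ∂(μX.prod μY) := by rw [hprod]
    _ = ∫ x, (∫ y, rexp (t * (x * y / (σX * σY))) ∂μY) ∂μX :=
        MeasureTheory.integral_prod _ hInt
    _ = ∫ x, rexp ((t ^ 2 / (2 * σX ^ 2)) * x ^ 2 + (t * (mY / σY) / σX) * x) ∂μX := by
        simp only [hinner]
    _ = rexp ((t * (mY / σY) / σX * σX + mX / σX) ^ 2
              / (2 * (1 - 2 * σX ^ 2 * (t ^ 2 / (2 * σX ^ 2)))) - mX ^ 2 / (2 * σX ^ 2))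
        / Real.sqrt (1 - 2 * σX ^ 2 * (t ^ 2 / (2 * σX ^ 2))) := houter.2
    _ = Real.exp ((((mX / σX) ^ 2 + (mY / σY) ^ 2) * t ^ 2
            + 2 * (mX / σX) * (mY / σY) * t) / (2 * (1 - t ^ 2)))
        / Real.sqrt (1 - t ^ 2) := by
        rw [mul_div_cancel₀ _ (by positivity : (2:ℝ) * σX ^ 2 ≠ 0)]
        congr 1
        have h1 : (1:ℝ) - t ^ 2 ≠ 0 := by nlinarith
        field_simp
        ring
end

section
/- Let (Ω, P) be a probability space and X, Y : Ω → ℝ be independent random variables with Measure.map X P = gaussianReal m_X (σ_X²) and Measure.map Y P = gaussianReal m_Y (σ_Y²), where σ_X > 0 and σ_Y > 0. Set ρ_X = m_X/σ_X, ρ_Y = m_Y/σ_Y, σ_Z = √(1 + ρ_X² + ρ_Y²), and let Z̃ = (X·Y/(σ_X·σ_Y) − ρ_X·ρ_Y)/σ_Z. Then for every real t with |t| < σ_Z, writing α = t/σ_Z, mgf Z̃ P t = exp( ((ρ_X² + ρ_Y²)·α² + 2·ρ_X·ρ_Y·α³) / (2·(1 − α²)) ) / √(1 − α²). -/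
open MeasureTheory ProbabilityTheory Real

lemma cast_quad (b c d x : ℝ) : (b : ℂ) * (x : ℂ) ^ 2 + (c : ℂ) * (x : ℂ) + (d : ℂ)
    = ((b * x ^ 2 + c * x + d : ℝ) : ℂ) := by push_cast; ring

lemma integrable_rexp_quadratic {b : ℝ} (hb : b < 0) (c d : ℝ) :
    Integrable (fun x : ℝ => rexp (b * x ^ 2 + c * x + d)) := by
  have hb' : (b : ℂ).re < 0 := by simpa using hb
  have h := (integrable_cexp_quadratic' hb' (c : ℂ) (d : ℂ)).norm
  refine h.congr (Filter.Eventually.of_forall fun x => ?_)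
  show ‖Complex.exp _‖ = _
  rw [cast_quad, ← Complex.ofReal_exp, Complex.norm_real, Real.norm_eq_abs,
    abs_of_pos (Real.exp_pos _)]

lemma integral_rexp_quadratic {b : ℝ} (hb : b < 0) (c d : ℝ) :
    ∫ x : ℝ, rexp (b * x ^ 2 + c * x + d)
      = Real.sqrt (π / -b) * rexp (d - c ^ 2 / (4 * b)) := by
  have hb' : (b : ℂ).re < 0 := by simpa using hb
  have h := integral_cexp_quadratic hb' (c : ℂ) (d : ℂ)
  simp_rw [cast_quad] at h
  have h2 : ((π : ℂ) / -(b : ℂ)) ^ (1 / 2 : ℂ) = ((Real.sqrt (π / -b) : ℝ) : ℂ) := by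
    rw [show ((π : ℂ) / -(b : ℂ)) = ((π / -b : ℝ) : ℂ) by push_cast; ring,
      Real.sqrt_eq_rpow, show (1/2:ℂ) = ((1/2:ℝ):ℂ) by norm_num,
      ← Complex.ofReal_cpow (div_nonneg pi_pos.le (by linarith))]
  rw [h2] at h
  rw [show ((d:ℂ) - (c:ℂ)^2/(4*(b:ℂ))) = ((d - c^2/(4*b):ℝ):ℂ) by push_cast; ring] at h
  simp_rw [← Complex.ofReal_exp] at h
  rw [← Complex.ofReal_mul] at h
  simp_rw [← Complex.coe_algebraMap, RCLike.algebraMap_eq_ofReal, integral_ofReal] at h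
  exact_mod_cast h

lemma integral_fun_gaussianReal (m : ℝ) {v : NNReal} (hv : v ≠ 0) (f : ℝ → ℝ) :
    ∫ x, f x ∂(gaussianReal m v) = ∫ x, gaussianPDFReal m v x * f x := by
  rw [gaussianReal_of_var_ne_zero m hv]
  have hd : gaussianPDF m v = fun x => (((gaussianPDFReal m v x).toNNReal : NNReal) : ENNReal) := by
    funext x; rw [gaussianPDF_def]; rfl
  rw [hd, integral_withDensity_eq_integral_smul
    ((measurable_gaussianPDFReal m v).real_toNNReal) f]
  refine integral_congr_ae (Filter.Eventually.of_forall fun x => ?_)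
  show (gaussianPDFReal m v x).toNNReal • f x = _
  rw [NNReal.smul_def, smul_eq_mul, Real.coe_toNNReal _ (gaussianPDFReal_nonneg m v x)]

lemma gaussian_pt (m : ℝ) (v : NNReal) (hv : 0 < (v:ℝ)) (b a x : ℝ) :
    gaussianPDFReal m v x * rexp (b * x ^ 2 + a * x)
      = (Real.sqrt (2 * π * (v:ℝ)))⁻¹
        * rexp ((2*b*(v:ℝ) - 1)/(2*(v:ℝ)) * x ^ 2 + (a + m/(v:ℝ)) * x + (- m^2/(2*(v:ℝ)))) := by
  rw [gaussianPDFReal, mul_assoc, ← Real.exp_add]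
  congr 1
  field_simp
  ring

lemma integrable_exp_quadratic_gaussianReal (m : ℝ) {v : NNReal} (hv : 0 < (v:ℝ)) {b : ℝ}
    (hb : 2 * b * (v:ℝ) < 1) (a : ℝ) :
    Integrable (fun x => rexp (b * x ^ 2 + a * x)) (gaussianReal m v) := by
  have hv0 : v ≠ 0 := by
    intro h; rw [h] at hv; simp at hv
  rw [gaussianReal_of_var_ne_zero m hv0]
  have hd : gaussianPDF m v = fun x => ENNReal.ofReal (gaussianPDFReal m v x) := by
    funext x; rw [gaussianPDF_def]
  rw [hd, integrable_withDensity_iff ((measurable_gaussianPDFReal m v).ennreal_ofReal) (Filter.Eventually.of_forall fun x =>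
    ENNReal.ofReal_lt_top)]
  have hB : (2*b*(v:ℝ) - 1)/(2*(v:ℝ)) < 0 := div_neg_of_neg_of_pos (by linarith) (by linarith)
  refine ((integrable_rexp_quadratic hB (a + m/(v:ℝ)) (- m^2/(2*(v:ℝ)))).const_mul
    (Real.sqrt (2 * π * (v:ℝ)))⁻¹).congr
    (Filter.Eventually.of_forall fun x => ?_)
  dsimp only
  rw [ENNReal.toReal_ofReal (gaussianPDFReal_nonneg m v x),
    mul_comm (rexp (b * x ^ 2 + a * x)), gaussian_pt m v hv b a x]

lemma integral_exp_quadratic_gaussianReal (m : ℝ) {v : NNReal} (hv : 0 < (v:ℝ)) {b : ℝ}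
    (hb : 2 * b * (v:ℝ) < 1) (a : ℝ) :
    ∫ x, rexp (b * x ^ 2 + a * x) ∂(gaussianReal m v)
      = rexp ((a + m/(v:ℝ))^2 * (v:ℝ) / (2*(1 - 2*b*(v:ℝ))) - m^2/(2*(v:ℝ)))
        / Real.sqrt (1 - 2*b*(v:ℝ)) := by
  have hv0 : v ≠ 0 := by
    intro h; rw [h] at hv; simp at hv
  have hB : (2*b*(v:ℝ) - 1)/(2*(v:ℝ)) < 0 := div_neg_of_neg_of_pos (by linarith) (by linarith)
  have hne2 : (1 - 2*b*(v:ℝ)) ≠ 0 := by linarith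
  have hne3 : (2*b*(v:ℝ) - 1) ≠ 0 := by linarith
  have hvne : (v:ℝ) ≠ 0 := by linarith
  rw [integral_fun_gaussianReal m hv0]
  simp_rw [gaussian_pt m v hv b a]
  rw [integral_const_mul, integral_rexp_quadratic hB]
  have h1 : π / -((2*b*(v:ℝ) - 1)/(2*(v:ℝ))) = (2 * π * (v:ℝ)) / (1 - 2*b*(v:ℝ)) := by
    field_simp
    ring
  rw [h1, Real.sqrt_div (by positivity)]
  have hA : Real.sqrt (2 * π * (v:ℝ)) ≠ 0 := by positivity
  rw [show (Real.sqrt (2 * π * (v:ℝ)))⁻¹ * (Real.sqrt (2 * π * (v:ℝ)) / Real.sqrt (1 - 2*b*(v:ℝ))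
      * rexp (- m^2/(2*(v:ℝ)) - (a + m/(v:ℝ))^2 / (4 * ((2*b*(v:ℝ) - 1)/(2*(v:ℝ))))))
    = ((Real.sqrt (2 * π * (v:ℝ)))⁻¹ * Real.sqrt (2 * π * (v:ℝ)))
      * (rexp (- m^2/(2*(v:ℝ)) - (a + m/(v:ℝ))^2 / (4 * ((2*b*(v:ℝ) - 1)/(2*(v:ℝ)))))
          / Real.sqrt (1 - 2*b*(v:ℝ))) by ring, inv_mul_cancel₀ hA, one_mul]
  congr 2
  rw [show (2*b*(v:ℝ) - 1) = -(1 - 2*b*(v:ℝ)) by ring]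
  field_simp
  ring

/-- Moment generating function of the standardized product of two independent normal
random variables. -/
theorem mgf_standardized_product_of_normals
    {Ω : Type*} [MeasurableSpace Ω] (P : Measure Ω) [IsProbabilityMeasure P]
    (X Y : Ω → ℝ) (hXY : IndepFun X Y P)
    (mX mY σX σY : ℝ) (hσX : 0 < σX) (hσY : 0 < σY)
    (hX : Measure.map X P = gaussianReal mX ⟨σX ^ 2, sq_nonneg σX⟩)
    (hY : Measure.map Y P = gaussianReal mY ⟨σY ^ 2, sq_nonneg σY⟩)
    (ρX ρY σZ : ℝ) (hρX : ρX = mX / σX) (hρY : ρY = mY / σY)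
    (hσZ : σZ = Real.sqrt (1 + ρX ^ 2 + ρY ^ 2))
    (t : ℝ) (ht : |t| < σZ) (α : ℝ) (hα : α = t / σZ) :
    mgf (fun ω => (X ω * Y ω / (σX * σY) - ρX * ρY) / σZ) P t
      = Real.exp (((ρX ^ 2 + ρY ^ 2) * α ^ 2 + 2 * ρX * ρY * α ^ 3)
            / (2 * (1 - α ^ 2)))
        / Real.sqrt (1 - α ^ 2) := by
  set vX : NNReal := ⟨σX ^ 2, sq_nonneg σX⟩ with hvX
  set vY : NNReal := ⟨σY ^ 2, sq_nonneg σY⟩ with hvY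
  have hσX2 : (vX : ℝ) = σX ^ 2 := rfl
  have hσY2 : (vY : ℝ) = σY ^ 2 := rfl
  have hvXpos : 0 < (vX:ℝ) := by rw [hσX2]; positivity
  have hvYpos : 0 < (vY:ℝ) := by rw [hσY2]; positivity
  have hσZpos : 0 < σZ := by
    rw [hσZ]
    have : (0:ℝ) < 1 + ρX ^ 2 + ρY ^ 2 := by positivity
    exact Real.sqrt_pos.mpr this
  have hα1 : |α| < 1 := by
    rw [hα, abs_div, abs_of_pos hσZpos, div_lt_one hσZpos]; exact ht
  have hα2 : α ^ 2 < 1 := by rw [← sq_abs]; nlinarith [abs_nonneg α]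
  have hone : (0:ℝ) < 1 - α ^ 2 := by linarith
  have ht' : t = α * σZ := by rw [hα, div_mul_cancel₀ _ hσZpos.ne']
  set c : ℝ := α / (σX * σY) with hc
  have hXm : AEMeasurable X P := by
    by_contra h
    rw [Measure.map_of_not_aemeasurable h] at hX
    exact (IsProbabilityMeasure.ne_zero (μ := gaussianReal mX vX)) hX.symm
  have hYm : AEMeasurable Y P := by
    by_contra h
    rw [Measure.map_of_not_aemeasurable h] at hY
    exact (IsProbabilityMeasure.ne_zero (μ := gaussianReal mY vY)) hY.symm
  have hpair : Measure.map (fun ω => (X ω, Y ω)) P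
      = (gaussianReal mX vX).prod (gaussianReal mY vY) := by
    rw [← hX, ← hY]
    exact (indepFun_iff_map_prod_eq_prod_map_map hXm hYm).mp hXY
  have hcont : Continuous fun p : ℝ × ℝ => rexp (c * (p.1 * p.2)) := by fun_prop
  have hpt : ∀ ω, rexp (t * ((X ω * Y ω / (σX * σY) - ρX * ρY) / σZ))
      = rexp (-(α * ρX * ρY)) * rexp (c * (X ω * Y ω)) := by
    intro ω
    rw [← Real.exp_add]
    congr 1
    rw [ht', hc]
    field_simp
    ring
  rw [mgf]
  simp only []
  simp_rw [hpt]
  rw [integral_const_mul]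
  set b' : ℝ := c ^ 2 * σY ^ 2 / 2 with hb'
  have hb'key : 2 * b' * (vX:ℝ) = α ^ 2 := by
    rw [hb', hσX2, hc]
    field_simp
  have hb0Y : 2 * (0:ℝ) * (vY:ℝ) < 1 := by norm_num
  have hbX : 2 * b' * (vX:ℝ) < 1 := by rw [hb'key]; exact hα2
  have hinner : ∀ x : ℝ, ∫ y, rexp (c * (x * y)) ∂(gaussianReal mY vY)
      = rexp (b' * x ^ 2 + (c * mY) * x) := by
    intro x
    rw [show (fun y => rexp (c * (x * y))) = fun y => rexp ((0:ℝ) * y ^ 2 + (c * x) * y) by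
      funext y; ring_nf]
    rw [integral_exp_quadratic_gaussianReal mY hvYpos hb0Y (c * x)]
    rw [show (1 - 2 * (0:ℝ) * (vY:ℝ)) = 1 by ring, Real.sqrt_one, div_one]
    congr 1
    rw [hσY2, hb']
    have h1 : σY ^ 2 ≠ 0 := by positivity
    field_simp
    ring
  have hInt : Integrable (fun p : ℝ × ℝ => rexp (c * (p.1 * p.2)))
      ((gaussianReal mX vX).prod (gaussianReal mY vY)) := by
    rw [integrable_prod_iff hcont.aestronglyMeasurable]
    constructor
    · refine Filter.Eventually.of_forall fun x => ?_
      refine (integrable_exp_quadratic_gaussianReal mY hvYpos hb0Y (c * x)).congr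
        (Filter.Eventually.of_forall fun y => ?_)
      ring_nf
    · refine (integrable_exp_quadratic_gaussianReal mX hvXpos hbX (c * mY)).congr
        (Filter.Eventually.of_forall fun x => ?_)
      simp_rw [Real.norm_eq_abs, abs_of_pos (Real.exp_pos _)]
      rw [hinner x]
  have hmain : ∫ ω, rexp (c * (X ω * Y ω)) ∂P
      = rexp ((c * mY + mX/(vX:ℝ))^2 * (vX:ℝ)/(2*(1 - α^2)) - mX^2/(2*(vX:ℝ)))
        / Real.sqrt (1 - α^2) := by
    have h1 : ∫ ω, rexp (c * (X ω * Y ω)) ∂P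
        = ∫ p : ℝ × ℝ, rexp (c * (p.1 * p.2))
            ∂((gaussianReal mX vX).prod (gaussianReal mY vY)) := by
      rw [← hpair, integral_map (hXm.prodMk hYm) hcont.aestronglyMeasurable]
    rw [h1, integral_prod _ hInt]
    simp_rw [hinner]
    rw [integral_exp_quadratic_gaussianReal mX hvXpos hbX (c * mY), hb'key]
  rw [hmain, mul_div_assoc', ← Real.exp_add]
  congr 2
  rw [hσX2, hc, hρX, hρY]
  have h1 : σX ≠ 0 := hσX.ne'
  have h2 : σY ≠ 0 := hσY.ne'
  field_simp
  ring
end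

section
/- Fix reals t and ρ_Y. For ρ > 0 define α(ρ) = t/√(1 + ρ² + ρ_Y²) and F(ρ) = exp( ((ρ² + ρ_Y²)·α(ρ)² + 2·ρ·ρ_Y·α(ρ)³) / (2·(1 − α(ρ)²)) ) / √(1 − α(ρ)²). Then F(ρ) tends to exp(t²/2) as ρ → ∞ (Filter.Tendsto F Filter.atTop (nhds (exp(t²/2)))). -/
open Real Filter

/-- The mgf of the standardized product of two independent normals converges pointwise to
the standard normal mgf `exp(t²/2)` as the signal-to-noise ratio `ρ` tends to infinity. -/
theorem mgf_product_tendsto_gaussian (t ρY : ℝ)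
    (α F : ℝ → ℝ)
    (hα : ∀ ρ, α ρ = t / Real.sqrt (1 + ρ ^ 2 + ρY ^ 2))
    (hF : ∀ ρ, F ρ = Real.exp (((ρ ^ 2 + ρY ^ 2) * (α ρ) ^ 2 + 2 * ρ * ρY * (α ρ) ^ 3)
          / (2 * (1 - (α ρ) ^ 2))) / Real.sqrt (1 - (α ρ) ^ 2)) :
    Tendsto F atTop (nhds (Real.exp (t ^ 2 / 2))) := by
  have hs : ∀ ρ : ℝ, (0:ℝ) < 1 + ρ ^ 2 + ρY ^ 2 := fun ρ => by positivity
  have hα2 : ∀ ρ, α ρ ^ 2 = t ^ 2 / (1 + ρ ^ 2 + ρY ^ 2) := by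
    intro ρ
    rw [hα, div_pow, Real.sq_sqrt (hs ρ).le]
  have hstop : Tendsto (fun ρ : ℝ => 1 + ρ ^ 2 + ρY ^ 2) atTop atTop := by
    apply tendsto_atTop_add_const_right
    apply tendsto_atTop_add_const_left
    exact tendsto_pow_atTop two_ne_zero
  have hα2to0 : Tendsto (fun ρ => α ρ ^ 2) atTop (nhds 0) := by
    have : Tendsto (fun ρ : ℝ => t ^ 2 * (1 + ρ ^ 2 + ρY ^ 2)⁻¹) atTop (nhds (t ^ 2 * 0)) :=
      tendsto_const_nhds.mul hstop.inv_tendsto_atTop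
    simpa [hα2, div_eq_mul_inv] using this
  have hA : Tendsto (fun ρ => (ρ ^ 2 + ρY ^ 2) * α ρ ^ 2) atTop (nhds (t ^ 2)) := by
    have heq : ∀ ρ, (ρ ^ 2 + ρY ^ 2) * α ρ ^ 2
        = t ^ 2 * (1 - (1 + ρ ^ 2 + ρY ^ 2)⁻¹) := by
      intro ρ
      rw [hα2]
      field_simp
      ring
    have : Tendsto (fun ρ : ℝ => t ^ 2 * (1 - (1 + ρ ^ 2 + ρY ^ 2)⁻¹)) atTop
        (nhds (t ^ 2 * (1 - 0))) :=
      tendsto_const_nhds.mul (tendsto_const_nhds.sub hstop.inv_tendsto_atTop)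
    simpa [heq] using this
  have hB : Tendsto (fun ρ => 2 * ρ * ρY * α ρ ^ 3) atTop (nhds 0) := by
    have hbound : ∀ ρ, ‖2 * ρ * ρY * α ρ ^ 3‖ ≤ 2 * |ρY| * |t| * α ρ ^ 2 := by
      intro ρ
      have hρα : |ρ * α ρ| ≤ |t| := by
        rw [hα]
        rw [abs_mul, abs_div]
        have h1 : |ρ| ≤ |Real.sqrt (1 + ρ ^ 2 + ρY ^ 2)| := by
          rw [abs_of_nonneg (Real.sqrt_nonneg _)]
          calc |ρ| = Real.sqrt (ρ ^ 2) := (Real.sqrt_sq_eq_abs ρ).symm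
          _ ≤ Real.sqrt (1 + ρ ^ 2 + ρY ^ 2) := Real.sqrt_le_sqrt (by nlinarith [sq_nonneg ρY])
        have h2 : (0:ℝ) < |Real.sqrt (1 + ρ ^ 2 + ρY ^ 2)| := by
          rw [abs_of_nonneg (Real.sqrt_nonneg _)]
          exact Real.sqrt_pos.mpr (hs ρ)
        calc |ρ| * (|t| / |Real.sqrt (1 + ρ ^ 2 + ρY ^ 2)|)
            ≤ |Real.sqrt (1 + ρ ^ 2 + ρY ^ 2)| * (|t| / |Real.sqrt (1 + ρ ^ 2 + ρY ^ 2)|) := by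
              apply mul_le_mul_of_nonneg_right h1 (by positivity)
          _ = |t| := by field_simp
      have : ‖2 * ρ * ρY * α ρ ^ 3‖ = 2 * |ρY| * |ρ * α ρ| * α ρ ^ 2 := by
        rw [Real.norm_eq_abs]
        rw [show 2 * ρ * ρY * α ρ ^ 3 = 2 * ρY * (ρ * α ρ) * α ρ ^ 2 by ring]
        rw [abs_mul, abs_mul, abs_mul, abs_two, abs_of_nonneg (sq_nonneg (α ρ))]
      rw [this]
      apply mul_le_mul_of_nonneg_right _ (sq_nonneg _)
      apply mul_le_mul_of_nonneg_left hρα (by positivity)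
    have hlim : Tendsto (fun ρ => 2 * |ρY| * |t| * α ρ ^ 2) atTop (nhds 0) := by
      have := tendsto_const_nhds.mul hα2to0 (f := fun ρ : ℝ => (2 * |ρY| * |t| : ℝ))
      simpa using this
    exact squeeze_zero_norm hbound hlim
  have hg : Tendsto (fun ρ => ((ρ ^ 2 + ρY ^ 2) * α ρ ^ 2 + 2 * ρ * ρY * α ρ ^ 3)
      / (2 * (1 - α ρ ^ 2))) atTop (nhds (t ^ 2 / 2)) := by
    have hden : Tendsto (fun ρ => 2 * (1 - α ρ ^ 2)) atTop (nhds 2) := by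
      have : Tendsto (fun ρ => (2:ℝ) * (1 - α ρ ^ 2)) atTop (nhds (2 * (1 - 0))) :=
        tendsto_const_nhds.mul (tendsto_const_nhds.sub hα2to0)
      simpa using this
    have := (hA.add hB).div hden two_ne_zero
    simpa [Pi.div_def] using this
  have hexp : Tendsto (fun ρ => Real.exp (((ρ ^ 2 + ρY ^ 2) * α ρ ^ 2 + 2 * ρ * ρY * α ρ ^ 3)
      / (2 * (1 - α ρ ^ 2)))) atTop (nhds (Real.exp (t ^ 2 / 2))) :=
    (Real.continuous_exp.tendsto _).comp hg
  have hsqrt : Tendsto (fun ρ => Real.sqrt (1 - α ρ ^ 2)) atTop (nhds 1) := by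
    have : Tendsto (fun ρ => Real.sqrt (1 - α ρ ^ 2)) atTop (nhds (Real.sqrt (1 - 0))) :=
      (Real.continuous_sqrt.tendsto _).comp (tendsto_const_nhds.sub hα2to0)
    simpa using this
  have hfin := hexp.div hsqrt one_ne_zero
  have hFeq : F = fun ρ => Real.exp (((ρ ^ 2 + ρY ^ 2) * α ρ ^ 2 + 2 * ρ * ρY * α ρ ^ 3)
      / (2 * (1 - α ρ ^ 2))) / Real.sqrt (1 - α ρ ^ 2) := funext hF
  rw [hFeq]
  simpa [Pi.div_def] using hfin
end
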